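/- arXiv:2009.02854 — 3 statements merged into one kernel-verified Lean document; each statement's English description precedes it below -/
import Mathlib

section
/- Let h₀ : ℝ^d → ℝ be differentiable with ‖∇h₀(x)‖ ≤ M for all x, let θ₀ ∈ ℝ^d with ‖θ₀‖ = 1, and suppose that for every y, h₀(y) ≥ 0 iff y·θ₀ ≥ 0. Then for any δ > 0 and any x with |x·θ₀| ≤ δ, we have |h₀(x)| ≤ M·δ. -/
open scoped RealInnerProductSpace

/-- If `h₀` is differentiable with `‖∇h₀‖ ≤ M`, `θ₀` is a unit vector,
`h₀(y) ≥ 0 ↔ y ⬝ θ₀ ≥ 0`, and `|x ⬝ θ₀| ≤ δ`, then `|h₀(x)| ≤ M δ`. -/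
theorem tsms_h0_small_near_hyperplane {d : ℕ} (M : ℝ)
    (h₀ : EuclideanSpace ℝ (Fin d) → ℝ) (hdiff : Differentiable ℝ h₀)
    (hgrad : ∀ x, ‖gradient h₀ x‖ ≤ M)
    (θ₀ : EuclideanSpace ℝ (Fin d)) (hθ₀ : ‖θ₀‖ = 1)
    (hsign : ∀ y, 0 ≤ h₀ y ↔ 0 ≤ ⟪y, θ₀⟫)
    (δ : ℝ) (hδ : 0 < δ) (x : EuclideanSpace ℝ (Fin d)) (hx : |⟪x, θ₀⟫| ≤ δ) :
    |h₀ x| ≤ M * δ := by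
  -- projection of x onto the hyperplane
  set p : EuclideanSpace ℝ (Fin d) := x - ⟪x, θ₀⟫ • θ₀ with hp
  have hpθ : ⟪p, θ₀⟫ = 0 := by
    rw [hp, inner_sub_left, real_inner_smul_left, real_inner_self_eq_norm_sq, hθ₀]
    ring
  -- h₀ p ≥ 0
  have h1 : 0 ≤ h₀ p := (hsign p).mpr (le_of_eq hpθ.symm)
  -- h₀ p ≤ 0 by continuity from below
  have h2 : h₀ p ≤ 0 := by
    have hcont : Filter.Tendsto (fun t : ℝ => h₀ (p - t • θ₀)) (nhdsWithin 0 (Set.Ioi 0))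
        (nhds (h₀ p)) := by
      have : Filter.Tendsto (fun t : ℝ => p - t • θ₀) (nhdsWithin 0 (Set.Ioi 0)) (nhds p) := by
        have hc : Continuous (fun t : ℝ => p - t • θ₀) := by fun_prop
        have := (hc.tendsto 0).mono_left (nhdsWithin_le_nhds (s := Set.Ioi (0:ℝ)))
        simpa using this
      exact (hdiff.continuous.tendsto p).comp this
    refine le_of_tendsto hcont ?_
    filter_upwards [self_mem_nhdsWithin] with t ht
    have hlt : ⟪p - t • θ₀, θ₀⟫ < 0 := by
      have : ⟪p - t • θ₀, θ₀⟫ = -t := by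
        rw [inner_sub_left, real_inner_smul_left, real_inner_self_eq_norm_sq, hθ₀, hpθ]
        ring
      rw [this]; simpa using (ht : (0:ℝ) < t)
    have := (hsign (p - t • θ₀)).not
    by_contra hcon
    push_neg at hcon
    exact absurd ((hsign _).mp hcon.le) (not_le.mpr hlt)
  have hp0 : h₀ p = 0 := le_antisymm h2 h1
  -- Lipschitz bound via gradient
  have hM : 0 ≤ M := le_trans (norm_nonneg _) (hgrad x)
  have hfd : ∀ y, ‖fderiv ℝ h₀ y‖ ≤ M := by
    intro y
    have : ‖fderiv ℝ h₀ y‖ = ‖gradient h₀ y‖ := by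
      rw [gradient]
      simp
    rw [this]; exact hgrad y
  have key : ‖h₀ x - h₀ p‖ ≤ M * ‖x - p‖ := by
    refine (convex_univ).norm_image_sub_le_of_norm_fderiv_le
      (fun y _ => hdiff y) ?_ trivial trivial
    intro y _
    exact hfd y
  have hxp : ‖x - p‖ = |⟪x, θ₀⟫| := by
    simp [hp, norm_smul, hθ₀, Real.norm_eq_abs]
  rw [hp0, sub_zero, Real.norm_eq_abs] at key
  calc |h₀ x| ≤ M * ‖x - p‖ := key
    _ = M * |⟪x, θ₀⟫| := by rw [hxp]
    _ ≤ M * δ := by exact mul_le_mul_of_nonneg_left hx hM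
end

section
/- Let θ, θ₀ ∈ ℝ^d with ‖θ₀‖ = 1, let x ∈ ℝ^d with ‖x‖ ≤ 1, and let h₀ : ℝ^d → ℝ be differentiable with ‖∇h₀‖ bounded by M and satisfying h₀(y) ≥ 0 iff y·θ₀ ≥ 0 for all y. Then |h₀(x)| · |𝟙{x·θ ≥ 0} − 𝟙{x·θ₀ ≥ 0}| ≤ M‖θ − θ₀‖. -/
open scoped RealInnerProductSpace

/-- Under the gradient bound and the sign-crossing condition on `h₀`,
`|h₀(x)| · |𝟙{x⬝θ ≥ 0} − 𝟙{x⬝θ₀ ≥ 0}| ≤ M ‖θ − θ₀‖` whenever `‖x‖ ≤ 1`. -/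
theorem tsms_weighted_indicator_bound {d : ℕ} (M : ℝ)
    (θ θ₀ : EuclideanSpace ℝ (Fin d)) (hθ₀ : ‖θ₀‖ = 1)
    (x : EuclideanSpace ℝ (Fin d)) (hx : ‖x‖ ≤ 1)
    (h₀ : EuclideanSpace ℝ (Fin d) → ℝ) (hdiff : Differentiable ℝ h₀)
    (hgrad : ∀ y, ‖gradient h₀ y‖ ≤ M)
    (hsign : ∀ y, 0 ≤ h₀ y ↔ 0 ≤ ⟪y, θ₀⟫) :
    |h₀ x| * |(if 0 ≤ ⟪x, θ⟫ then (1 : ℝ) else 0) - (if 0 ≤ ⟪x, θ₀⟫ then (1 : ℝ) else 0)|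
      ≤ M * ‖θ - θ₀‖ := by
  have hfd : ∀ y, ‖fderiv ℝ h₀ y‖ ≤ M := by
    intro y
    have := hgrad y
    simpa [gradient] using this
  have hM : 0 ≤ M := le_trans (norm_nonneg _) (hfd 0)
  have hMθ : 0 ≤ M * ‖θ - θ₀‖ := mul_nonneg hM (norm_nonneg _)
  by_cases hsame : (0 ≤ ⟪x, θ⟫) ↔ (0 ≤ ⟪x, θ₀⟫)
  · rcases hsame with ⟨h1, h2⟩
    by_cases ha : 0 ≤ ⟪x, θ⟫
    · rw [if_pos ha, if_pos (h1 ha)]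
      simpa using hMθ
    · rw [if_neg ha, if_neg (fun h => ha (h2 h))]
      simpa using hMθ
  -- indicators differ: |⟪x,θ₀⟫| ≤ ‖θ-θ₀‖
  have hinner : |⟪x, θ₀⟫| ≤ ‖θ - θ₀‖ := by
    have hdiffb : |⟪x, θ⟫ - ⟪x, θ₀⟫| ≤ ‖θ - θ₀‖ := by
      rw [← inner_sub_right]
      calc |⟪x, θ - θ₀⟫| ≤ ‖x‖ * ‖θ - θ₀‖ := abs_real_inner_le_norm _ _
        _ ≤ 1 * ‖θ - θ₀‖ := by gcongr
        _ = ‖θ - θ₀‖ := one_mul _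
    by_cases hb : 0 ≤ ⟪x, θ₀⟫
    · have ha : ⟪x, θ⟫ < 0 := by
        by_contra h
        push_neg at h
        exact hsame ⟨fun _ => hb, fun _ => h⟩
      have : |⟪x, θ₀⟫| = ⟪x, θ₀⟫ := abs_of_nonneg hb
      calc |⟪x, θ₀⟫| = ⟪x, θ₀⟫ := this
        _ ≤ ⟪x, θ₀⟫ - ⟪x, θ⟫ := by linarith
        _ ≤ |⟪x, θ⟫ - ⟪x, θ₀⟫| := by rw [abs_sub_comm]; exact le_abs_self _
        _ ≤ ‖θ - θ₀‖ := hdiffb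
    · have ha : ⟪x, θ₀⟫ < 0 := lt_of_not_ge hb
      have hc : 0 ≤ ⟪x, θ⟫ := by
        by_contra h
        exact hsame ⟨fun h' => absurd h' h, fun h' => absurd h' hb⟩
      calc |⟪x, θ₀⟫| = -⟪x, θ₀⟫ := abs_of_neg ha
        _ ≤ ⟪x, θ⟫ - ⟪x, θ₀⟫ := by linarith
        _ ≤ |⟪x, θ⟫ - ⟪x, θ₀⟫| := le_abs_self _
        _ ≤ ‖θ - θ₀‖ := hdiffb
  -- projection point z with h₀ z = 0
  set z : EuclideanSpace ℝ (Fin d) := x - ⟪x, θ₀⟫ • θ₀ with hz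
  have hzθ₀ : ⟪z, θ₀⟫ = 0 := by
    rw [hz, inner_sub_left, real_inner_smul_left, real_inner_self_eq_norm_sq, hθ₀]
    ring
  have hz0 : h₀ z = 0 := by
    have hge : 0 ≤ h₀ z := (hsign z).mpr (le_of_eq hzθ₀.symm)
    rcases lt_or_eq_of_le hge with hgt | heq
    · exfalso
      have hcont : ContinuousAt (fun t : ℝ => h₀ (z + t • θ₀)) 0 := by
        apply (hdiff.continuous.comp (by continuity : Continuous fun t : ℝ => z + t • θ₀)).continuousAt
      have hev : ∀ᶠ t in nhds (0 : ℝ), 0 < h₀ (z + t • θ₀) := by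
        have : (fun t : ℝ => h₀ (z + t • θ₀)) 0 = h₀ z := by simp
        exact hcont.eventually_mem (isOpen_Ioi.mem_nhds (by simpa [this] using hgt))
      rcases Metric.eventually_nhds_iff.mp hev with ⟨ε, hε, hball⟩
      have hneg : 0 < h₀ (z + (-(ε/2)) • θ₀) := by
        apply hball
        rw [Real.dist_eq, sub_zero, abs_neg, abs_of_pos (by linarith : (0:ℝ) < ε/2)]
        linarith
      have : 0 ≤ ⟪z + (-(ε/2)) • θ₀, θ₀⟫ := (hsign _).mp hneg.le
      rw [inner_add_left, hzθ₀, real_inner_smul_left, real_inner_self_eq_norm_sq, hθ₀] at this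
      nlinarith
    · exact heq.symm
  -- Lipschitz bound
  have hlip : |h₀ x - h₀ z| ≤ M * ‖x - z‖ := by
    have := convex_univ.norm_image_sub_le_of_norm_fderiv_le (f := h₀) (C := M)
      (fun y _ => hdiff.differentiableAt) (fun y _ => hfd y)
      (Set.mem_univ z) (Set.mem_univ x)
    simpa [Real.norm_eq_abs] using this
  have hxz : ‖x - z‖ = |⟪x, θ₀⟫| := by
    rw [hz]
    simp [norm_smul, Real.norm_eq_abs, hθ₀]
  have hbound : |h₀ x| ≤ M * ‖θ - θ₀‖ := by
    have : |h₀ x| ≤ M * |⟪x, θ₀⟫| := by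
      rw [← hxz]; simpa [hz0] using hlip
    calc |h₀ x| ≤ M * |⟪x, θ₀⟫| := this
      _ ≤ M * ‖θ - θ₀‖ := by gcongr
  have hind : |(if 0 ≤ ⟪x, θ⟫ then (1 : ℝ) else 0) - (if 0 ≤ ⟪x, θ₀⟫ then (1 : ℝ) else 0)| ≤ 1 := by
    split_ifs <;> norm_num
  calc |h₀ x| * |(if 0 ≤ ⟪x, θ⟫ then (1 : ℝ) else 0) - (if 0 ≤ ⟪x, θ₀⟫ then (1 : ℝ) else 0)|
      ≤ |h₀ x| * 1 := by gcongr
    _ = |h₀ x| := mul_one _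
    _ ≤ M * ‖θ - θ₀‖ := hbound
end

section
/- Let X be uniform on the open unit ball of ℝ^d, let θ₀ ∈ ℝ^d with ‖θ₀‖ = 1, let h₀ : ℝ^d → ℝ be measurable and bounded by M with h₀(x) ≥ 0 iff x·θ₀ ≥ 0, and with Lipschitz constant M, and let C := M·(surface area constant). Then for all θ with ‖θ − θ₀‖ = δ ≤ 1, E[h₀(X)²·|𝟙{X·θ ≥ 0} − 𝟙{X·θ₀ ≥ 0}|] ≤ C·δ³. -/
open MeasureTheory
open scoped RealInnerProductSpace

/-- For `X` uniform on the open unit ball, `θ₀` a unit vector, and `h₀`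
measurable, bounded by `M`, `M`-Lipschitz, with `h₀(x) ≥ 0 ↔ x⬝θ₀ ≥ 0`, there is `C > 0`
such that for all `θ` with `‖θ − θ₀‖ ≤ 1`,
`E[h₀(X)² |𝟙{X⬝θ ≥ 0} − 𝟙{X⬝θ₀ ≥ 0}|] ≤ C ‖θ − θ₀‖³`. -/
theorem tsms_envelope_cubic_bound {d : ℕ} (M : ℝ) (hM : 0 < M)
    (θ₀ : EuclideanSpace ℝ (Fin d)) (hθ₀ : ‖θ₀‖ = 1)
    (h₀ : EuclideanSpace ℝ (Fin d) → ℝ) (hmeas : Measurable h₀)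
    (hbdd : ∀ x, |h₀ x| ≤ M)
    (hsign : ∀ x, 0 ≤ h₀ x ↔ 0 ≤ ⟪x, θ₀⟫)
    (hlip : LipschitzWith (Real.toNNReal M) h₀) :
    ∃ C : ℝ, 0 < C ∧ ∀ θ : EuclideanSpace ℝ (Fin d), ‖θ - θ₀‖ ≤ 1 →
      (∫ x, h₀ x ^ 2 *
          |(if 0 ≤ ⟪x, θ⟫ then (1 : ℝ) else 0) - (if 0 ≤ ⟪x, θ₀⟫ then (1 : ℝ) else 0)|
        ∂((volume (Metric.ball (0 : EuclideanSpace ℝ (Fin d)) 1))⁻¹ •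
            volume.restrict (Metric.ball (0 : EuclideanSpace ℝ (Fin d)) 1)))
        ≤ C * ‖θ - θ₀‖ ^ 3 := by
  classical
  rcases Nat.eq_zero_or_pos d with hd0 | hd0
  · subst hd0
    have : θ₀ = 0 := Subsingleton.elim _ _
    rw [this, norm_zero] at hθ₀
    norm_num at hθ₀
  have i0 : Fin d := ⟨0, hd0⟩
  set v : EuclideanSpace ℝ (Fin d) := EuclideanSpace.single i0 (1 : ℝ) with hv
  have hvnorm : ‖v‖ = 1 := by simp [hv]
  set L : EuclideanSpace ℝ (Fin d) ≃ₗᵢ[ℝ] EuclideanSpace ℝ (Fin d) :=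
    Submodule.reflection (ℝ ∙ (θ₀ - v))ᗮ with hLdef
  have hLθ : L θ₀ = v := Submodule.reflection_sub (by rw [hθ₀, hvnorm])
  set B := Metric.ball (0 : EuclideanSpace ℝ (Fin d)) 1 with hBdef
  have hBmeas : MeasurableSet B := measurableSet_ball
  have hBpos : 0 < volume B := Metric.measure_ball_pos _ _ one_pos
  have hBfin : volume B ≠ ⊤ := measure_ball_lt_top.ne
  set b := (volume B).toReal with hbdef
  have hbpos : 0 < b := ENNReal.toReal_pos hBpos.ne' hBfin
  refine ⟨M ^ 2 * 2 ^ d / b, by positivity, ?_⟩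
  intro θ hθ
  set δ := ‖θ - θ₀‖ with hδdef
  have hδ0 : 0 ≤ δ := norm_nonneg _
  -- Step A: |h₀ x| ≤ M * |⟪x, θ₀⟫|
  have key : ∀ x, |h₀ x| ≤ M * |⟪x, θ₀⟫| := by
    intro x
    set y := x - ⟪x, θ₀⟫ • θ₀ with hy
    have hyθ : ⟪y, θ₀⟫ = 0 := by
      rw [hy, inner_sub_left, real_inner_smul_left, real_inner_self_eq_norm_sq, hθ₀]
      ring
    have h1 : 0 ≤ h₀ y := (hsign y).2 (le_of_eq hyθ.symm)
    have h2 : h₀ y ≤ 0 := by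
      refine le_of_forall_pos_le_add ?_
      intro ε hε
      set z := y - (ε / M) • θ₀ with hz
      have hzθ : ⟪z, θ₀⟫ < 0 := by
        rw [hz, inner_sub_left, real_inner_smul_left, hyθ, real_inner_self_eq_norm_sq, hθ₀]
        have : 0 < ε / M := div_pos hε hM
        nlinarith
      have hz2 : h₀ z < 0 := by
        by_contra h
        push_neg at h
        exact absurd ((hsign z).1 h) (not_le.2 hzθ)
      have hd1 : dist (h₀ y) (h₀ z) ≤ M * dist y z := by
        have := hlip.dist_le_mul y z
        rwa [Real.coe_toNNReal M hM.le] at this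
      have hdist : dist y z = ε / M := by
        rw [dist_eq_norm]
        simp [hz, norm_smul, hθ₀, abs_div, abs_of_pos hε, abs_of_pos hM]
      rw [Real.dist_eq] at hd1
      have h5 : h₀ y - h₀ z ≤ |h₀ y - h₀ z| := le_abs_self _
      have h6 : M * dist y z = ε := by
        rw [hdist]; field_simp
      linarith
    have h3 : h₀ y = 0 := le_antisymm h2 h1
    have h4 := hlip.dist_le_mul x y
    rw [Real.coe_toNNReal M hM.le] at h4
    have h7 : |h₀ x| ≤ M * dist x y := by
      rw [Real.dist_eq, h3, sub_zero] at h4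
      exact h4
    have h8 : dist x y = |⟪x, θ₀⟫| := by
      rw [dist_eq_norm, hy]
      simp [norm_smul, hθ₀, Real.norm_eq_abs]
    rwa [h8] at h7
  -- the slab
  set S : Set (EuclideanSpace ℝ (Fin d)) := {x | |⟪x, θ₀⟫| ≤ δ} with hSdef
  have hinner_cont : ∀ w : EuclideanSpace ℝ (Fin d), Continuous fun x : EuclideanSpace ℝ (Fin d) => (⟪x, w⟫ : ℝ) :=
    fun w => continuous_id.inner continuous_const
  have hSmeas : MeasurableSet S :=
    measurableSet_le (hinner_cont θ₀).abs.measurable measurable_const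
  -- Step B: pointwise bound on B
  have hpt : ∀ x ∈ B, h₀ x ^ 2 *
      |(if 0 ≤ ⟪x, θ⟫ then (1 : ℝ) else 0) - (if 0 ≤ ⟪x, θ₀⟫ then (1 : ℝ) else 0)|
      ≤ S.indicator (fun _ => (M * δ) ^ 2) x := by
    intro x hx
    have hxnorm : ‖x‖ ≤ 1 := le_of_lt (by simpa [hBdef] using mem_ball_zero_iff.mp hx)
    by_cases hiff : (0 ≤ ⟪x, θ⟫) ↔ (0 ≤ ⟪x, θ₀⟫)
    · have he : (if 0 ≤ ⟪x, θ⟫ then (1 : ℝ) else 0) = (if 0 ≤ ⟪x, θ₀⟫ then (1 : ℝ) else 0) :=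
        if_congr hiff rfl rfl
      rw [he, sub_self, abs_zero, mul_zero]
      exact Set.indicator_nonneg (fun _ _ => by positivity) x
    · have hCS : |⟪x, θ - θ₀⟫| ≤ δ := by
        calc |⟪x, θ - θ₀⟫| ≤ ‖x‖ * ‖θ - θ₀‖ := abs_real_inner_le_norm x (θ - θ₀)
          _ ≤ 1 * δ := mul_le_mul_of_nonneg_right hxnorm hδ0
          _ = δ := one_mul δ
      rw [inner_sub_right] at hCS
      have hxS : x ∈ S := by
        rw [hSdef, Set.mem_setOf_eq]
        by_cases ha : 0 ≤ ⟪x, θ⟫ <;> by_cases hb : 0 ≤ ⟪x, θ₀⟫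
        · exact absurd (iff_of_true ha hb) hiff
        · push_neg at hb
          rw [abs_of_neg hb]
          have := neg_abs_le (⟪x, θ⟫ - ⟪x, θ₀⟫)
          linarith [le_abs_self (⟪x, θ⟫ - ⟪x, θ₀⟫)]
        · push_neg at ha
          rw [abs_of_nonneg hb]
          linarith [neg_abs_le (⟪x, θ⟫ - ⟪x, θ₀⟫)]
        · exact absurd (iff_of_false ha hb) hiff
      have habs : |(if 0 ≤ ⟪x, θ⟫ then (1 : ℝ) else 0) - (if 0 ≤ ⟪x, θ₀⟫ then (1 : ℝ) else 0)| ≤ 1 := by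
        split_ifs <;> norm_num
      have hh : h₀ x ^ 2 ≤ (M * δ) ^ 2 := by
        have h1 : |h₀ x| ≤ M * δ := by
          have := key x
          have h2 : M * |⟪x, θ₀⟫| ≤ M * δ := mul_le_mul_of_nonneg_left hxS hM.le
          linarith
        calc h₀ x ^ 2 = |h₀ x| ^ 2 := (sq_abs _).symm
          _ ≤ (M * δ) ^ 2 := pow_le_pow_left₀ (abs_nonneg _) h1 2
      rw [Set.indicator_of_mem hxS]
      calc h₀ x ^ 2 * |_| ≤ (M * δ) ^ 2 * 1 := by
            apply mul_le_mul hh habs (abs_nonneg _) (by positivity)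
        _ = (M * δ) ^ 2 := mul_one _
  -- measurability / integrability
  have hmeasθ : ∀ w : EuclideanSpace ℝ (Fin d),
      Measurable fun x : EuclideanSpace ℝ (Fin d) => (if 0 ≤ ⟪x, w⟫ then (1 : ℝ) else 0) := by
    intro w
    exact Measurable.ite (measurableSet_le measurable_const (hinner_cont w).measurable)
      measurable_const measurable_const
  have hfmeas : Measurable (fun x : EuclideanSpace ℝ (Fin d) => h₀ x ^ 2 *
      |(if 0 ≤ ⟪x, θ⟫ then (1 : ℝ) else 0) - (if 0 ≤ ⟪x, θ₀⟫ then (1 : ℝ) else 0)|) :=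
    (hmeas.pow_const 2).mul (((hmeasθ θ).sub (hmeasθ θ₀)).abs)
  have hconst : IntegrableOn (fun _ : EuclideanSpace ℝ (Fin d) => (M : ℝ) ^ 2) B volume :=
    integrableOn_const measure_ball_lt_top.ne
  have hfint : IntegrableOn (fun x : EuclideanSpace ℝ (Fin d) => h₀ x ^ 2 *
      |(if 0 ≤ ⟪x, θ⟫ then (1 : ℝ) else 0) - (if 0 ≤ ⟪x, θ₀⟫ then (1 : ℝ) else 0)|) B volume := by
    refine Integrable.mono' hconst hfmeas.aestronglyMeasurable ?_
    filter_upwards with x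
    have habs : |(if 0 ≤ ⟪x, θ⟫ then (1 : ℝ) else 0) - (if 0 ≤ ⟪x, θ₀⟫ then (1 : ℝ) else 0)| ≤ 1 := by
      split_ifs <;> norm_num
    have hh : h₀ x ^ 2 ≤ M ^ 2 := by
      calc h₀ x ^ 2 = |h₀ x| ^ 2 := (sq_abs _).symm
        _ ≤ M ^ 2 := pow_le_pow_left₀ (abs_nonneg _) (hbdd x) 2
    have hnn : (0:ℝ) ≤ h₀ x ^ 2 *
        |(if 0 ≤ ⟪x, θ⟫ then (1 : ℝ) else 0) - (if 0 ≤ ⟪x, θ₀⟫ then (1 : ℝ) else 0)| := by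
      positivity
    rw [Real.norm_of_nonneg hnn]
    calc h₀ x ^ 2 * |(if 0 ≤ ⟪x, θ⟫ then (1 : ℝ) else 0) - (if 0 ≤ ⟪x, θ₀⟫ then (1 : ℝ) else 0)|
        ≤ M ^ 2 * 1 := mul_le_mul hh habs (abs_nonneg _) (by positivity)
      _ = M ^ 2 := mul_one _
  have gint : IntegrableOn (S.indicator fun _ : EuclideanSpace ℝ (Fin d) => (M * δ) ^ 2) B volume :=
    (integrableOn_const measure_ball_lt_top.ne).indicator hSmeas
  -- Step C: volume of slab ∩ ball
  have hvol : volume (S ∩ B) ≤ ENNReal.ofReal (2 * δ) * ENNReal.ofReal 2 ^ (d - 1) := by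
    set T : Set (Fin d → ℝ) :=
      Set.univ.pi (fun i => if i = i0 then Set.Icc (-δ) δ else Set.Icc (-1 : ℝ) 1) with hTdef
    have hTmeas : MeasurableSet T :=
      MeasurableSet.univ_pi (fun i => by split <;> exact measurableSet_Icc)
    set e := (MeasurableEquiv.toLp 2 (Fin d → ℝ)).symm with hedef
    have hsub : S ∩ B ⊆ (fun x => e (L x)) ⁻¹' T := by
      rintro x ⟨hxS, hxB⟩
      intro i _
      show e (L x) i ∈ (if i = i0 then Set.Icc (-δ) δ else Set.Icc (-1 : ℝ) 1)
      have hcoord : ∀ (y : EuclideanSpace ℝ (Fin d)) (j : Fin d), e y j = y j := fun _ _ => rfl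
      by_cases hi : i = i0
      · rw [if_pos hi]
        have h1 : ⟪L x, v⟫ = ⟪x, θ₀⟫ := by rw [← hLθ, LinearIsometryEquiv.inner_map_map]
        have h2 : (L x) i0 = ⟪x, θ₀⟫ := by
          rw [← h1, hv]
          simp [EuclideanSpace.inner_single_right]
        rw [hcoord, hi, h2]
        exact abs_le.mp hxS
      · simp only [if_neg hi]
        rw [hcoord]
        have h3 : |⟪L x, EuclideanSpace.single i (1 : ℝ)⟫| ≤ ‖L x‖ * ‖EuclideanSpace.single i (1 : ℝ)‖ :=
          abs_real_inner_le_norm _ _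
        have h4 : |(L x) i| ≤ ‖x‖ := by
          rw [EuclideanSpace.inner_single_right] at h3
          simpa [LinearIsometryEquiv.norm_map] using h3
        have h5 : ‖x‖ ≤ 1 := le_of_lt (by simpa [hBdef] using mem_ball_zero_iff.mp hxB)
        exact abs_le.mp (h4.trans h5)
    calc volume (S ∩ B) ≤ volume ((fun x => e (L x)) ⁻¹' T) := measure_mono hsub
      _ = volume (⇑L ⁻¹' (⇑e ⁻¹' T)) := rfl
      _ = volume (⇑e ⁻¹' T) :=
          L.measurePreserving.measure_preimage
            ((e.measurable hTmeas).nullMeasurableSet)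
      _ = volume T :=
          (EuclideanSpace.volume_preserving_symm_measurableEquiv_toLp (Fin d)).measure_preimage
            hTmeas.nullMeasurableSet
      _ = ∏ i : Fin d, volume (if i = i0 then Set.Icc (-δ) δ else Set.Icc (-1 : ℝ) 1) := volume_pi_pi _
      _ = ENNReal.ofReal (2 * δ) * ENNReal.ofReal 2 ^ (d - 1) := by
          rw [← Finset.mul_prod_erase Finset.univ _ (Finset.mem_univ i0)]
          congr 1
          · rw [if_pos rfl, Real.volume_Icc]
            congr 1; ring
          · rw [Finset.prod_congr rfl (fun i hi => ?_), Finset.prod_const,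
              Finset.card_erase_of_mem (Finset.mem_univ i0), Finset.card_univ, Fintype.card_fin]
            rw [if_neg (Finset.ne_of_mem_erase hi), Real.volume_Icc]
            norm_num
  have hvolR : (volume (S ∩ B)).toReal ≤ 2 ^ d * δ := by
    have heq : ENNReal.ofReal (2 * δ) * ENNReal.ofReal 2 ^ (d - 1) = ENNReal.ofReal (2 ^ d * δ) := by
      rw [← ENNReal.ofReal_pow (by norm_num), ← ENNReal.ofReal_mul (by positivity)]
      congr 1
      have h2d : (2 : ℝ) ^ d = 2 * 2 ^ (d - 1) := by
        rw [← pow_succ']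
        congr 1
        omega
      rw [h2d]; ring
    rw [heq] at hvol
    calc (volume (S ∩ B)).toReal ≤ (ENNReal.ofReal (2 ^ d * δ)).toReal :=
          ENNReal.toReal_mono ENNReal.ofReal_ne_top hvol
      _ = 2 ^ d * δ := ENNReal.toReal_ofReal (by positivity)
  -- assemble
  rw [integral_smul_measure]
  have hsmul : ((volume B)⁻¹).toReal = b⁻¹ := by rw [ENNReal.toReal_inv]
  rw [hsmul, smul_eq_mul]
  have hle1 : (∫ x in B, h₀ x ^ 2 *
      |(if 0 ≤ ⟪x, θ⟫ then (1 : ℝ) else 0) - (if 0 ≤ ⟪x, θ₀⟫ then (1 : ℝ) else 0)|)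
      ≤ (volume (S ∩ B)).toReal * (M * δ) ^ 2 := by
    calc (∫ x in B, h₀ x ^ 2 *
        |(if 0 ≤ ⟪x, θ⟫ then (1 : ℝ) else 0) - (if 0 ≤ ⟪x, θ₀⟫ then (1 : ℝ) else 0)|)
        ≤ ∫ x in B, S.indicator (fun _ => (M * δ) ^ 2) x :=
          setIntegral_mono_on hfint gint hBmeas hpt
      _ = ∫ x in S, (M * δ) ^ 2 ∂(volume.restrict B) := integral_indicator hSmeas
      _ = ((volume.restrict B) S).toReal • (M * δ) ^ 2 := setIntegral_const _
      _ = (volume (S ∩ B)).toReal * (M * δ) ^ 2 := by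
          rw [Measure.restrict_apply hSmeas, smul_eq_mul]
  have hfinal : b⁻¹ * (∫ x in B, h₀ x ^ 2 *
      |(if 0 ≤ ⟪x, θ⟫ then (1 : ℝ) else 0) - (if 0 ≤ ⟪x, θ₀⟫ then (1 : ℝ) else 0)|)
      ≤ b⁻¹ * ((2 ^ d * δ) * (M * δ) ^ 2) := by
    apply mul_le_mul_of_nonneg_left _ (inv_nonneg.2 hbpos.le)
    calc _ ≤ (volume (S ∩ B)).toReal * (M * δ) ^ 2 := hle1
      _ ≤ (2 ^ d * δ) * (M * δ) ^ 2 := mul_le_mul_of_nonneg_right hvolR (by positivity)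
  calc _ ≤ b⁻¹ * ((2 ^ d * δ) * (M * δ) ^ 2) := hfinal
    _ = M ^ 2 * 2 ^ d / b * δ ^ 3 := by field_simp
end
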